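/- For every integer N ≥ 1, every n with 1 ≤ n ≤ N, and every real t, the (N+1)×(N+1) complex matrix V_n(t) is unitary, i.e. V_n(t)ᴴ·V_n(t) = I. -/

import Mathlib

noncomputable def gf (E ε η t : ℝ) : ℂ :=
  Complex.exp (Complex.I * t * (E - ε) / 2)

noncomputable def wf (E ε η t : ℝ) : ℂ :=
  (2 * Complex.I * η / Real.sqrt ((E - ε) ^ 2 + 4 * η ^ 2)) *
    Real.sin (t * Real.sqrt ((E - ε) ^ 2 / 4 + η ^ 2))

noncomputable def zf (E ε η t : ℝ) : ℂ :=
  (Real.cos (t * Real.sqrt ((E - ε) ^ 2 / 4 + η ^ 2)) : ℂ) +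
    (Complex.I * (E - ε) / Real.sqrt ((E - ε) ^ 2 + 4 * η ^ 2)) *
      Real.sin (t * Real.sqrt ((E - ε) ^ 2 / 4 + η ^ 2))

noncomputable def Vmat (E ε η : ℝ) (N n : ℕ) (t : ℝ) :
    Matrix (Fin (N + 1)) (Fin (N + 1)) ℂ :=
  fun j k =>
    if j.val = 0 then
      gf E ε η t * zf E ε η t * (if k.val = 0 then 1 else 0) +
        gf E ε η t * wf E ε η t * (if k.val = n then 1 else 0)
    else if j.val = n then
      gf E ε η t * wf E ε η t * (if k.val = 0 then 1 else 0) +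
        gf E ε η t * zf E ε η (-t) * (if k.val = n then 1 else 0)
    else if j = k then 1 else 0

lemma gf_star (E ε η t : ℝ) : (starRingEnd ℂ) (gf E ε η t) * gf E ε η t = 1 := by
  have h : (starRingEnd ℂ) (Complex.I * t * (E - ε) / 2) = -(Complex.I * t * (E - ε) / 2) := by
    simp only [map_div₀, map_mul, map_sub, Complex.conj_I, Complex.conj_ofReal, map_ofNat]
    ring
  rw [gf, ← Complex.exp_conj, h, ← Complex.exp_add, neg_add_cancel, Complex.exp_zero]

lemma wf_star (E ε η t : ℝ) : (starRingEnd ℂ) (wf E ε η t) = - wf E ε η t := by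
  simp only [wf, map_mul, map_div₀, Complex.conj_I, Complex.conj_ofReal, map_ofNat]
  ring

lemma zf_neg (E ε η t : ℝ) : zf E ε η (-t) = (starRingEnd ℂ) (zf E ε η t) := by
  simp only [zf, neg_mul, Real.cos_neg, Real.sin_neg, Complex.ofReal_neg, map_add, map_mul,
    map_div₀, map_sub, Complex.conj_I, Complex.conj_ofReal]
  ring

lemma zw_norm (E ε η : ℝ) (hη : 0 < η) (t : ℝ) :
    (starRingEnd ℂ) (zf E ε η t) * zf E ε η t +
      (starRingEnd ℂ) (wf E ε η t) * wf E ε η t = 1 := by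
  have hnn : (0:ℝ) ≤ (E-ε)^2 + 4*η^2 := by positivity
  have hpos : (0:ℝ) < (E-ε)^2 + 4*η^2 := by positivity
  rw [← zf_neg, wf_star]
  set θ := t * Real.sqrt ((E - ε) ^ 2 / 4 + η ^ 2) with hθ
  have hS : ((Real.sqrt ((E-ε)^2+4*η^2) : ℝ) : ℂ)^2 = ((E:ℂ)-ε)^2 + 4*(η:ℂ)^2 := by
    rw [← Complex.ofReal_pow, Real.sq_sqrt hnn]; push_cast; ring
  have hS0 : ((Real.sqrt ((E-ε)^2+4*η^2) : ℝ) : ℂ) ≠ 0 := by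
    simpa using (Real.sqrt_pos.mpr hpos).ne'
  have hcs : ((Real.cos θ : ℝ):ℂ)^2 + ((Real.sin θ : ℝ):ℂ)^2 = 1 := by
    exact_mod_cast Real.cos_sq_add_sin_sq θ
  simp only [zf, wf, neg_mul, Real.cos_neg, Real.sin_neg, Complex.ofReal_neg, ← hθ]
  set c := ((Real.cos θ : ℝ):ℂ)
  set s := ((Real.sin θ : ℝ):ℂ)
  set S := ((Real.sqrt ((E-ε)^2+4*η^2) : ℝ) : ℂ)
  field_simp
  linear_combination (c^2 - 1) * hS + (-(((E:ℂ)-ε)^2 + 4*(η:ℂ)^2) * s^2) * Complex.I_sq +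
    (((E:ℂ)-ε)^2 + 4*(η:ℂ)^2) * hcs
lemma aux_unitary {M : ℕ} (a b : Fin M) (hab : a ≠ b) (g w z : ℂ)
    (hg : (starRingEnd ℂ) g * g = 1) (hw : (starRingEnd ℂ) w = -w)
    (hzw : (starRingEnd ℂ) z * z + (starRingEnd ℂ) w * w = 1)
    (A : Matrix (Fin M) (Fin M) ℂ)
    (hA0 : ∀ k, A a k = g * z * (if k = a then 1 else 0) + g * w * (if k = b then 1 else 0))
    (hAb : ∀ k, A b k = g * w * (if k = a then 1 else 0) +
      g * (starRingEnd ℂ) z * (if k = b then 1 else 0))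
    (hAg : ∀ m k, m ≠ a → m ≠ b → A m k = if m = k then 1 else 0) :
    A.conjTranspose * A = 1 := by
  have haa : A a a = g * z := by rw [hA0, if_pos rfl, if_neg hab]; ring
  have hab2 : A a b = g * w := by rw [hA0, if_neg (Ne.symm hab), if_pos rfl]; ring
  have hba : A b a = g * w := by rw [hAb, if_pos rfl, if_neg hab]; ring
  have hbb : A b b = g * (starRingEnd ℂ) z := by
    rw [hAb, if_neg (Ne.symm hab), if_pos rfl]; ring
  ext j k
  rw [Matrix.mul_apply, Matrix.one_apply]
  simp only [Matrix.conjTranspose_apply, Complex.star_def]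
  by_cases hj : j = a
  · rw [hj]
    have hsum : ∀ m : Fin M, (starRingEnd ℂ) (A m a) * A m k
        = (if m = a then (starRingEnd ℂ) (A a a) * A a k else 0)
          + (if m = b then (starRingEnd ℂ) (A b a) * A b k else 0) := by
      intro m
      by_cases h1 : m = a
      · rw [if_pos h1, if_neg (fun h => hab (h1.symm.trans h)), h1, add_zero]
      · by_cases h2 : m = b
        · rw [if_neg h1, if_pos h2, h2, zero_add]
        · rw [hAg m a h1 h2, if_neg h1, if_neg h1, if_neg h2]; simp
    rw [Finset.sum_congr rfl (fun m _ => hsum m), Finset.sum_add_distrib,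
        Finset.sum_ite_eq', Finset.sum_ite_eq']
    simp only [Finset.mem_univ, if_true]
    rw [haa, hba]
    by_cases hk : k = a
    · rw [hk, haa, hba, if_pos rfl]
      simp only [map_mul]
      linear_combination ((starRingEnd ℂ) z * z + (starRingEnd ℂ) w * w) * hg + hzw
    · by_cases hk2 : k = b
      · rw [hk2, hab2, hbb, if_neg hab]
        simp only [map_mul]
        rw [hw]; ring
      · rw [hA0 k, hAb k, if_neg hk, if_neg hk2, if_neg (fun h => hk h.symm)]
        simp
  · by_cases hj2 : j = b
    · rw [hj2]
      have hsum : ∀ m : Fin M, (starRingEnd ℂ) (A m b) * A m k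
          = (if m = a then (starRingEnd ℂ) (A a b) * A a k else 0)
            + (if m = b then (starRingEnd ℂ) (A b b) * A b k else 0) := by
        intro m
        by_cases h1 : m = a
        · rw [if_pos h1, if_neg (fun h => hab (h1.symm.trans h)), h1, add_zero]
        · by_cases h2 : m = b
          · rw [if_neg h1, if_pos h2, h2, zero_add]
          · rw [hAg m b h1 h2, if_neg h1, if_neg h2, if_neg h2]; simp
      rw [Finset.sum_congr rfl (fun m _ => hsum m), Finset.sum_add_distrib,
          Finset.sum_ite_eq', Finset.sum_ite_eq']
      simp only [Finset.mem_univ, if_true]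
      rw [hab2, hbb]
      by_cases hk : k = a
      · rw [hk, haa, hba, if_neg (Ne.symm hab)]
        simp only [map_mul]
        rw [hw, Complex.conj_conj]; ring
      · by_cases hk2 : k = b
        · rw [hk2, hab2, hbb, if_pos rfl]
          simp only [map_mul]
          rw [Complex.conj_conj]
          linear_combination ((starRingEnd ℂ) z * z + (starRingEnd ℂ) w * w) * hg + hzw
        · rw [hA0 k, hAb k, if_neg hk, if_neg hk2, if_neg (fun h => hk2 h.symm)]
          simp
    · have hsum : ∀ m : Fin M, (starRingEnd ℂ) (A m j) * A m k
          = if m = j then A j k else 0 := by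
        intro m
        by_cases h1 : m = a
        · rw [h1, hA0 j, if_neg hj, if_neg hj2, if_neg (fun h : (a:Fin M) = j => hj h.symm)]
          simp
        · by_cases h2 : m = b
          · rw [h2, hAb j, if_neg hj, if_neg hj2, if_neg (fun h : (b:Fin M) = j => hj2 h.symm)]
            simp
          · rw [hAg m j h1 h2]
            by_cases h3 : m = j
            · rw [if_pos h3, if_pos h3, h3]; simp
            · rw [if_neg h3, if_neg h3]; simp
      rw [Finset.sum_congr rfl (fun m _ => hsum m), Finset.sum_ite_eq']
      simp only [Finset.mem_univ, if_true]
      rw [hAg j k hj hj2]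

theorem stmt19 (E ε η : ℝ) (hη : 0 < η) (N n : ℕ) (hN : 1 ≤ N)
    (hn1 : 1 ≤ n) (hnN : n ≤ N) (t : ℝ) :
    (Vmat E ε η N n t).conjTranspose * Vmat E ε η N n t = 1 := by
  have hn0 : n ≠ 0 := by omega
  have hnlt : n < N + 1 := by omega
  refine aux_unitary (⟨0, Nat.succ_pos N⟩ : Fin (N+1)) ⟨n, hnlt⟩ ?_
    (gf E ε η t) (wf E ε η t) (zf E ε η t)
    (gf_star E ε η t) (wf_star E ε η t) (zw_norm E ε η hη t) _ ?_ ?_ ?_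
  · simp [Fin.ext_iff]; omega
  · intro k; simp [Vmat, Fin.ext_iff, -Fin.val_eq_zero_iff]
  · intro k; simp [Vmat, Fin.ext_iff, hn0, ← zf_neg, -Fin.val_eq_zero_iff]
  · intro m k h1 h2
    simp [Vmat, show m.val ≠ 0 from fun h => h1 (Fin.ext h),
      show m.val ≠ n from fun h => h2 (Fin.ext h)]
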